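/- Let f(x) = √(π/8)·(2π − |x| + sin|x|) for |x| ≤ 2π and f(x) = 0 otherwise. Then the Fourier transform of f (with convention f̂(y) = (1/√(2π))∫ f(x)e^{−ixy}dx) equals f̂(y) = sin²(πy)/(y²(1−y²)) for all real y (interpreted by continuity at y = 0, ±1). In particular f ≥ 0 on ℝ and f̂(y) ≤ 0 for |y| ≥ 1. -/

import Mathlib

open Complex Real

/-- The extremal function `f(x) = √(π/8)(2π − |x| + sin|x|)` on `[-2π, 2π]`, `0` elsewhere. -/
noncomputable def extremalF (x : ℝ) : ℝ :=
  if |x| ≤ 2 * Real.pi then Real.sqrt (Real.pi / 8) * (2 * Real.pi - |x| + Real.sin |x|)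
  else 0

/-- Fourier transform with convention `f̂(y) = (1/√(2π)) ∫ f(x) e^{-ixy} dx`. -/
noncomputable def extremalFhat (y : ℝ) : ℂ :=
  (1 / Real.sqrt (2 * Real.pi) : ℝ) *
    ∫ x : ℝ, (extremalF x : ℂ) * Complex.exp (-Complex.I * x * y)

open MeasureTheory

noncomputable def Jval (y : ℝ) : ℝ :=
  ∫ x in (0:ℝ)..(2*Real.pi), (2*Real.pi - x + Real.sin x) * Real.cos (x*y)

lemma Jval_eq (y : ℝ) (h0 : y ≠ 0) (h1 : y ≠ 1) (h2 : y ≠ -1) :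
    Jval y = 2 * Real.sin (Real.pi*y)^2 / (y^2 * (1 - y^2)) := by
  have ha : (1:ℝ) + y ≠ 0 := fun h => h2 (by linarith [h])
  have hb : (1:ℝ) - y ≠ 0 := fun h => h1 (by linarith [h])
  set F : ℝ → ℝ := fun x =>
    (2*Real.pi - x) * Real.sin (x*y) / y - Real.cos (x*y) / y^2
      - (Real.cos ((1+y)*x)/(1+y) + Real.cos ((1-y)*x)/(1-y)) / 2 with hF
  have hderiv : ∀ x : ℝ, HasDerivAt F ((2*Real.pi - x + Real.sin x) * Real.cos (x*y)) x := by
    intro x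
    have hxy : HasDerivAt (fun t : ℝ => t * y) y x := hasDerivAt_mul_const y
    have hsin : HasDerivAt (fun t : ℝ => Real.sin (t*y)) (Real.cos (x*y) * y) x :=
      hxy.sin
    have hcos : HasDerivAt (fun t : ℝ => Real.cos (t*y)) (-Real.sin (x*y) * y) x :=
      hxy.cos
    have hlin : HasDerivAt (fun t : ℝ => 2*Real.pi - t) (-1) x := by
      simpa using (hasDerivAt_id x).const_sub (2*Real.pi)
    have h1' : HasDerivAt (fun t : ℝ => (2*Real.pi - t) * Real.sin (t*y) / y)
        (((-1) * Real.sin (x*y) + (2*Real.pi - x) * (Real.cos (x*y) * y)) / y) x :=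
      (hlin.mul hsin).div_const y
    have hax : HasDerivAt (fun t : ℝ => (1+y) * t) (1+y) x := by
      simpa using (hasDerivAt_id x).const_mul (1+y)
    have hbx : HasDerivAt (fun t : ℝ => (1-y) * t) (1-y) x := by
      simpa using (hasDerivAt_id x).const_mul (1-y)
    have hca : HasDerivAt (fun t : ℝ => Real.cos ((1+y)*t)) (-Real.sin ((1+y)*x) * (1+y)) x :=
      (Real.hasDerivAt_cos ((1+y)*x)).comp x hax
    have hcb : HasDerivAt (fun t : ℝ => Real.cos ((1-y)*t)) (-Real.sin ((1-y)*x) * (1-y)) x :=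
      (Real.hasDerivAt_cos ((1-y)*x)).comp x hbx
    have hall := (h1'.sub ((hcos.div_const (y^2)))).sub
      (((hca.div_const (1+y)).add (hcb.div_const (1-y))).div_const 2)
    refine hall.congr_deriv ?_
    have e1 : (1+y)*x = x + x*y := by ring
    have e2 : (1-y)*x = x - x*y := by ring
    rw [e1, e2, Real.sin_add, Real.sin_sub]
    field_simp
    ring
  have hint : IntervalIntegrable (fun x => (2*Real.pi - x + Real.sin x) * Real.cos (x*y))
      volume 0 (2*Real.pi) := (by fun_prop : Continuous fun x : ℝ => (2*Real.pi - x + Real.sin x) * Real.cos (x*y)).intervalIntegrable _ _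
  have := intervalIntegral.integral_eq_sub_of_hasDerivAt (fun x _ => hderiv x) hint
  rw [Jval, this, hF]
  simp only
  have c1 : Real.cos ((1+y)*(2*Real.pi)) = Real.cos (2*Real.pi*y) := by
    rw [show (1+y)*(2*Real.pi) = 2*Real.pi*y + 2*Real.pi by ring, Real.cos_add_two_pi]
  have c2 : Real.cos ((1-y)*(2*Real.pi)) = Real.cos (2*Real.pi*y) := by
    rw [show (1-y)*(2*Real.pi) = 2*Real.pi - 2*Real.pi*y by ring, Real.cos_two_pi_sub]
  have c3 : Real.cos (2*Real.pi*y) = 1 - 2 * Real.sin (Real.pi*y)^2 := by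
    have := Real.sin_sq_eq_half_sub (Real.pi*y)
    rw [show 2*(Real.pi*y) = 2*Real.pi*y by ring] at this
    linarith
  rw [c1, c2, c3]
  simp only [zero_mul, Real.sin_zero, Real.cos_zero, mul_zero, sub_self]
  have h1y : (1:ℝ) - y^2 ≠ 0 := by
    have e : (1-y)*(1+y) = 1 - y^2 := by ring
    rw [← e]; exact mul_ne_zero hb ha
  field_simp
  ring

lemma Jval_one : Jval 1 = 0 := by
  set F : ℝ → ℝ := fun x => (2*Real.pi - x) * Real.sin x - Real.cos x + (Real.sin x)^2/2 with hF
  have hderiv : ∀ x : ℝ, HasDerivAt F ((2*Real.pi - x + Real.sin x) * Real.cos (x*1)) x := by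
    intro x
    have hlin : HasDerivAt (fun t : ℝ => 2*Real.pi - t) (-1) x := by
      simpa using (hasDerivAt_id x).const_sub (2*Real.pi)
    have hall := ((hlin.mul (Real.hasDerivAt_sin x)).sub (Real.hasDerivAt_cos x)).add
      (((Real.hasDerivAt_sin x).pow 2).div_const 2)
    refine hall.congr_deriv ?_
    simp
    ring
  have hint : IntervalIntegrable (fun x => (2*Real.pi - x + Real.sin x) * Real.cos (x*1))
      volume 0 (2*Real.pi) := (by fun_prop : Continuous fun x : ℝ => (2*Real.pi - x + Real.sin x) * Real.cos (x*1)).intervalIntegrable _ _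
  have := intervalIntegral.integral_eq_sub_of_hasDerivAt (fun x _ => hderiv x) hint
  rw [Jval, this, hF]
  simp

lemma Jval_neg_one : Jval (-1) = 0 := by
  have : Jval (-1) = Jval 1 := by
    unfold Jval
    congr 1
    funext x
    rw [show x * (-1) = -(x*1) by ring, Real.cos_neg]
  rw [this, Jval_one]


lemma const_eq : Real.sqrt (Real.pi/8) = Real.sqrt (2*Real.pi) / 4 := by
  rw [eq_div_iff (by norm_num : (4:ℝ) ≠ 0)]
  rw [show (4:ℝ) = Real.sqrt 16 by rw [show (16:ℝ) = 4^2 by norm_num, Real.sqrt_sq (by norm_num : (0:ℝ) ≤ 4)]]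
  rw [← Real.sqrt_mul (by positivity) 16]
  congr 1
  ring

lemma hat_eq (y : ℝ) : extremalFhat y = ((Jval y / 2 : ℝ) : ℂ) := by
  have hπ : (0:ℝ) < Real.pi := Real.pi_pos
  have hc : (0:ℝ) ≤ Real.sqrt (Real.pi/8) := Real.sqrt_nonneg _
  set c := Real.sqrt (Real.pi/8) with hcdef
  clear_value c
  set G : ℝ → ℂ := fun x => ((c * (2*Real.pi - |x| + Real.sin |x|) : ℝ) : ℂ) *
    Complex.exp (-Complex.I * x * y) with hG
  have hGcont : Continuous G := by fun_prop
  have hind : (fun x : ℝ => (extremalF x : ℂ) * Complex.exp (-Complex.I * x * y))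
      = Set.indicator (Set.Icc (-(2*Real.pi)) (2*Real.pi)) G := by
    funext x
    by_cases h : |x| ≤ 2*Real.pi
    · rw [Set.indicator_of_mem (Set.mem_Icc.mpr (abs_le.mp h))]
      simp only [hG, extremalF, if_pos h, hcdef]
    · rw [Set.indicator_of_notMem (fun hm => h (abs_le.mpr (Set.mem_Icc.mp hm)))]
      simp [extremalF, h]
  have step1 : (∫ x : ℝ, (extremalF x : ℂ) * Complex.exp (-Complex.I * x * y))
      = ∫ x in (-(2*Real.pi))..(2*Real.pi), G x := by
    rw [hind, integral_indicator measurableSet_Icc, integral_Icc_eq_integral_Ioc,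
      ← intervalIntegral.integral_of_le (by linarith : -(2*Real.pi) ≤ 2*Real.pi)]
  have hI1 : IntervalIntegrable G volume 0 (2*Real.pi) := hGcont.intervalIntegrable _ _
  have hI2 : IntervalIntegrable (fun x => G (-x)) volume 0 (2*Real.pi) :=
    (hGcont.comp continuous_neg).intervalIntegrable _ _
  have step2 : (∫ x in (-(2*Real.pi))..(2*Real.pi), G x)
      = ∫ x in (0:ℝ)..(2*Real.pi), (G (-x) + G x) := by
    rw [intervalIntegral.integral_add hI2 hI1]
    have : (∫ x in (0:ℝ)..(2*Real.pi), G (-x)) = ∫ x in (-(2*Real.pi))..(0:ℝ), G x := by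
      rw [intervalIntegral.integral_comp_neg G]
      norm_num
    rw [this, intervalIntegral.integral_add_adjacent_intervals]
    · exact (hGcont.intervalIntegrable _ _)
    · exact (hGcont.intervalIntegrable _ _)
  have step3 : (∫ x in (0:ℝ)..(2*Real.pi), (G (-x) + G x))
      = ∫ x in (0:ℝ)..(2*Real.pi),
          ((2 * c * ((2*Real.pi - x + Real.sin x) * Real.cos (x*y)) : ℝ) : ℂ) := by
    apply intervalIntegral.integral_congr
    intro x hx
    rw [Set.uIcc_of_le (by linarith : (0:ℝ) ≤ 2*Real.pi)] at hx
    have hx0 : 0 ≤ x := hx.1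
    have habs : |x| = x := abs_of_nonneg hx0
    have habs' : |(-x)| = x := by rw [abs_neg, habs]
    simp only [hG, habs, habs']
    push_cast
    have e1 : -Complex.I * -(x:ℂ) * (y:ℂ) = ((x*y : ℝ):ℂ) * Complex.I := by push_cast; ring
    have e2 : -Complex.I * (x:ℂ) * (y:ℂ) = (-((x*y : ℝ):ℂ)) * Complex.I := by push_cast; ring
    rw [e1, e2, Complex.exp_mul_I, Complex.exp_mul_I]
    simp only [Complex.cos_neg, Complex.sin_neg]
    rw [← Complex.ofReal_cos]
    push_cast
    ring
  have step4 : (∫ x in (0:ℝ)..(2*Real.pi),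
      ((2 * c * ((2*Real.pi - x + Real.sin x) * Real.cos (x*y)) : ℝ) : ℂ))
      = ((2 * c * Jval y : ℝ) : ℂ) := by
    rw [intervalIntegral.integral_ofReal]
    norm_cast
    rw [intervalIntegral.integral_const_mul, Jval]
  rw [extremalFhat, step1, step2, step3, step4]
  rw [← Complex.ofReal_mul]
  congr 1
  rw [hcdef, const_eq]
  have h2π : Real.sqrt (2*Real.pi) ≠ 0 := by positivity
  field_simp
  ring


theorem extremalF_fourier :
    (∀ x : ℝ, 0 ≤ extremalF x) ∧
      (∀ y : ℝ, y ≠ 0 → y ≠ 1 → y ≠ -1 →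
        extremalFhat y = ((Real.sin (Real.pi * y)) ^ 2 / (y ^ 2 * (1 - y ^ 2)) : ℝ)) ∧
      (∀ y : ℝ, 1 ≤ |y| → (extremalFhat y).re ≤ 0 ∧ (extremalFhat y).im = 0) := by
  have hπ : (0:ℝ) < Real.pi := Real.pi_pos
  have hform : ∀ y : ℝ, y ≠ 0 → y ≠ 1 → y ≠ -1 →
      extremalFhat y = ((Real.sin (Real.pi * y)) ^ 2 / (y ^ 2 * (1 - y ^ 2)) : ℝ) := by
    intro y h0 h1 h2
    rw [hat_eq y, Jval_eq y h0 h1 h2]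
    congr 1
    ring
  refine ⟨?_, hform, ?_⟩
  · intro x
    unfold extremalF
    split_ifs with h
    · apply mul_nonneg (Real.sqrt_nonneg _)
      have ht : 0 ≤ |x| := abs_nonneg x
      have h2 : Real.sin (2*Real.pi - |x|) ≤ 2*Real.pi - |x| := Real.sin_le (by linarith)
      have h3 : Real.sin (2*Real.pi - |x|) = -Real.sin |x| := by
        rw [show 2*Real.pi - |x| = -|x| + 2*Real.pi by ring, Real.sin_add_two_pi, Real.sin_neg]
      linarith
    · exact le_refl 0
  · intro y hy
    constructor
    · rcases eq_or_lt_of_le hy with heq | hlt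
      · rcases (abs_eq (by norm_num : (0:ℝ) ≤ 1)).mp heq.symm with h | h
        · rw [hat_eq, h, Jval_one]; norm_num
        · rw [hat_eq, h, Jval_neg_one]; norm_num
      · have h0 : y ≠ 0 := by intro h; rw [h] at hlt; simp at hlt; linarith
        have h1 : y ≠ 1 := by intro h; rw [h] at hlt; norm_num at hlt
        have h2 : y ≠ -1 := by intro h; rw [h] at hlt; norm_num at hlt
        rw [hform y h0 h1 h2]
        have hy2 : 1 < y^2 := by
          nlinarith [_root_.sq_abs y, abs_nonneg y]
        have hden : y^2 * (1 - y^2) < 0 :=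
          mul_neg_of_pos_of_neg (by nlinarith) (by linarith)
        rw [Complex.ofReal_re]
        exact div_nonpos_iff.mpr (Or.inl ⟨sq_nonneg _, le_of_lt hden⟩)
    · rw [hat_eq]
      simp
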